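/- Let A ∈ ℝ^{V×W}, b ∈ ℝ^V, c ∈ ℝ^W, and let (𝒫, 𝒬) be an equitable partition of A with b constant on classes of 𝒫 and c constant on classes of 𝒬. Let C = Π_𝒫, D = Π_𝒬, A' = CˢAD, b' = Cˢb, c' = Dᵗc. If x' ∈ ℝ^𝒬 is feasible for the LP max (c')ᵗx' s.t. A'x' ≤ b', then x = Dx' is feasible for max cᵗx s.t. Ax ≤ b, and optimality is preserved in both directions via the maps x ↦ Dˢx and x' ↦ Dx'. -/

import Mathlib

open Finset Matrix
open scoped Classical

/-- A partition matrix: a 0–1 matrix with exactly one 1 in each row and at least one 1 in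
each column. -/
def PartitionMatrix {V T : Type*} [Fintype V] [Fintype T] (P : Matrix V T ℝ) : Prop :=
  (∀ v t, P v t = 0 ∨ P v t = 1) ∧ (∀ v, ∃! t, P v t = 1) ∧ (∀ t, ∃ v, P v t = 1)

/-- The scaled transpose `Πˢ` of a partition matrix: `Πˢ t v = Π v t / ∑_{v'} Π v' t`. -/
noncomputable def scaledT {V T : Type*} [Fintype V] (P : Matrix V T ℝ) : Matrix T V ℝ :=
  Matrix.of fun t v => P v t / ∑ v', P v' t

/-- Feasibility for the dual-form LP `max cᵗx s.t. Ax ≤ b` (componentwise inequality). -/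
def DualFeasible {V W : Type*} [Fintype V] [Fintype W]
    (A : Matrix V W ℝ) (b : V → ℝ) (x : W → ℝ) : Prop :=
  ∀ v, (A *ᵥ x) v ≤ b v

/-- Optimality for the dual-form LP `max cᵗx s.t. Ax ≤ b`. -/
def DualOptimal {V W : Type*} [Fintype V] [Fintype W]
    (A : Matrix V W ℝ) (b : V → ℝ) (c : W → ℝ) (x : W → ℝ) : Prop :=
  DualFeasible A b x ∧ ∀ y : W → ℝ, DualFeasible A b y → c ⬝ᵥ y ≤ c ⬝ᵥ x

section Aux
variable {V T : Type*} [Fintype V] [Fintype T]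

noncomputable def pmCls (P : Matrix V T ℝ) (hP : PartitionMatrix P) (v : V) : T :=
  (hP.2.1 v).choose

lemma pmCls_one (P : Matrix V T ℝ) (hP : PartitionMatrix P) (v : V) :
    P v (pmCls P hP v) = 1 := (hP.2.1 v).choose_spec.1

lemma pm_one_iff (P : Matrix V T ℝ) (hP : PartitionMatrix P) (v : V) (t : T) :
    P v t = 1 ↔ pmCls P hP v = t := by
  constructor
  · intro h; exact ((hP.2.1 v).choose_spec.2 t h).symm
  · rintro rfl; exact pmCls_one P hP v

lemma pm_ite (P : Matrix V T ℝ) (hP : PartitionMatrix P) (v : V) (t : T) :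
    P v t = if pmCls P hP v = t then 1 else 0 := by
  by_cases he : pmCls P hP v = t
  · simp [he, (pm_one_iff P hP v t).mpr he]
  · simp only [he, if_false]
    rcases hP.1 v t with h | h
    · exact h
    · exact absurd ((pm_one_iff P hP v t).mp h) he

lemma pm_filter (P : Matrix V T ℝ) (hP : PartitionMatrix P) (t : T) :
    univ.filter (fun v => P v t = 1) = univ.filter (fun v => pmCls P hP v = t) := by
  ext v; simp [pm_one_iff P hP]

lemma pm_colsum (P : Matrix V T ℝ) (hP : PartitionMatrix P) (t : T) :
    ∑ v, P v t = ((univ.filter (fun v => pmCls P hP v = t)).card : ℝ) := by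
  simp only [fun v => pm_ite P hP v t]
  rw [Finset.sum_boole]

lemma pm_class_nonempty (P : Matrix V T ℝ) (hP : PartitionMatrix P) (t : T) :
    (univ.filter (fun v => pmCls P hP v = t)).Nonempty := by
  obtain ⟨v, hv⟩ := hP.2.2 t
  exact ⟨v, by simp [(pm_one_iff P hP v t).mp hv]⟩

lemma pm_colsum_pos (P : Matrix V T ℝ) (hP : PartitionMatrix P) (t : T) :
    0 < ∑ v, P v t := by
  rw [pm_colsum P hP t]
  exact_mod_cast Finset.card_pos.mpr (pm_class_nonempty P hP t)

lemma pm_mulVec (P : Matrix V T ℝ) (hP : PartitionMatrix P) (x : T → ℝ) (v : V) :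
    (P *ᵥ x) v = x (pmCls P hP v) := by
  simp [mulVec, dotProduct, fun t => pm_ite P hP v t, ite_mul]

lemma pm_scaledT_mulVec (P : Matrix V T ℝ) (hP : PartitionMatrix P) (b : V → ℝ) (t : T) :
    (scaledT P *ᵥ b) t
      = (∑ v ∈ univ.filter (fun v => pmCls P hP v = t), b v) / (∑ v, P v t) := by
  simp only [scaledT, mulVec, dotProduct, Matrix.of_apply, div_mul_eq_mul_div,
    ← Finset.sum_div]
  congr 1
  rw [Finset.sum_filter]
  refine Finset.sum_congr rfl fun v _ => ?_
  rw [pm_ite P hP v t]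
  split <;> simp

lemma pm_scaledT_mulVec_const (P : Matrix V T ℝ) (hP : PartitionMatrix P) (b : V → ℝ)
    (v : V) (hb : ∀ v', pmCls P hP v' = pmCls P hP v → b v' = b v) :
    (scaledT P *ᵥ b) (pmCls P hP v) = b v := by
  rw [pm_scaledT_mulVec P hP, pm_colsum P hP]
  rw [Finset.sum_congr rfl (fun v' hv' => hb v' (by simpa using hv'))]
  rw [Finset.sum_const, nsmul_eq_mul]
  have hcard : ((univ.filter (fun v' => pmCls P hP v' = pmCls P hP v)).card : ℝ) ≠ 0 := by
    exact_mod_cast Finset.card_pos.mpr (pm_class_nonempty P hP _) |>.ne'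
  field_simp

lemma pm_scaledT_mono (P : Matrix V T ℝ) (hP : PartitionMatrix P) {y z : V → ℝ}
    (h : ∀ v, y v ≤ z v) (t : T) : (scaledT P *ᵥ y) t ≤ (scaledT P *ᵥ z) t := by
  simp only [scaledT, mulVec, dotProduct, Matrix.of_apply]
  refine Finset.sum_le_sum fun v _ => ?_
  have hnn : 0 ≤ P v t / ∑ v', P v' t := by
    apply div_nonneg
    · rcases hP.1 v t with h0 | h0 <;> simp [h0]
    · exact (pm_colsum_pos P hP t).le
  exact mul_le_mul_of_nonneg_left (h v) hnn

end Aux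
section Key
variable {V W Pt Qt : Type*} [Fintype V] [Fintype W] [Fintype Pt] [Fintype Qt]

lemma prod_entry (A : Matrix V W ℝ) (C : Matrix V Pt ℝ) (D : Matrix W Qt ℝ)
    (hC : PartitionMatrix C) (hD : PartitionMatrix D) (p : Pt) (q : Qt) :
    (scaledT C * A * D) p q =
      (∑ v ∈ univ.filter (fun v => pmCls C hC v = p),
        ∑ w ∈ univ.filter (fun w => pmCls D hD w = q), A v w) / (∑ v, C v p) := by
  have h1 : ∀ w, (scaledT C * A) p w
      = (∑ v ∈ univ.filter (fun v => pmCls C hC v = p), A v w) / (∑ v, C v p) := by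
    intro w
    rw [Matrix.mul_apply]
    simp only [scaledT, Matrix.of_apply, div_mul_eq_mul_div, ← Finset.sum_div]
    congr 1
    rw [Finset.sum_filter]
    refine Finset.sum_congr rfl fun v _ => ?_
    rw [pm_ite C hC v p]; split <;> simp
  rw [Matrix.mul_apply]
  simp only [h1]
  conv_rhs => rw [Finset.sum_comm (f := fun v w => A v w), Finset.sum_div]
  rw [Finset.sum_filter]
  refine Finset.sum_congr rfl fun w _ => ?_
  rw [pm_ite D hD w q]; split <;> simp

lemma prod_entry_row (A : Matrix V W ℝ) (C : Matrix V Pt ℝ) (D : Matrix W Qt ℝ)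
    (hC : PartitionMatrix C) (hD : PartitionMatrix D)
    (hrow : ∀ (p : Pt) (q : Qt) (v v' : V), C v p = 1 → C v' p = 1 →
      ∑ w ∈ univ.filter (fun w => D w q = 1), A v w =
      ∑ w ∈ univ.filter (fun w => D w q = 1), A v' w)
    (v : V) (q : Qt) :
    (scaledT C * A * D) (pmCls C hC v) q
      = ∑ w ∈ univ.filter (fun w => pmCls D hD w = q), A v w := by
  rw [prod_entry A C D hC hD]
  have hterm : ∀ v' ∈ univ.filter (fun v' => pmCls C hC v' = pmCls C hC v),
      (∑ w ∈ univ.filter (fun w => pmCls D hD w = q), A v' w)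
        = ∑ w ∈ univ.filter (fun w => pmCls D hD w = q), A v w := by
    intro v' hv'
    rw [← pm_filter D hD q]
    exact hrow _ q v' v ((pm_one_iff C hC v' _).mpr (by simpa using hv')) (pmCls_one C hC v)
  rw [Finset.sum_congr rfl hterm, Finset.sum_const, nsmul_eq_mul, pm_colsum C hC]
  have hne : ((univ.filter fun v' => pmCls C hC v' = pmCls C hC v).card : ℝ) ≠ 0 :=
    Nat.cast_ne_zero.mpr (Finset.card_pos.mpr (pm_class_nonempty C hC _)).ne'
  field_simp

lemma keyL1 (A : Matrix V W ℝ) (C : Matrix V Pt ℝ) (D : Matrix W Qt ℝ)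
    (hC : PartitionMatrix C) (hD : PartitionMatrix D)
    (hrow : ∀ (p : Pt) (q : Qt) (v v' : V), C v p = 1 → C v' p = 1 →
      ∑ w ∈ univ.filter (fun w => D w q = 1), A v w =
      ∑ w ∈ univ.filter (fun w => D w q = 1), A v' w)
    (x' : Qt → ℝ) (v : V) :
    ((scaledT C * A * D) *ᵥ x') (pmCls C hC v) = (A *ᵥ (D *ᵥ x')) v := by
  have hDx : (D *ᵥ x') = fun w => x' (pmCls D hD w) := funext (pm_mulVec D hD x')
  calc ((scaledT C * A * D) *ᵥ x') (pmCls C hC v)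
      = ∑ q, (∑ w ∈ univ.filter (fun w => pmCls D hD w = q), A v w) * x' q := by
        simp only [Matrix.mulVec, dotProduct]
        exact Finset.sum_congr rfl fun q _ => by
          beta_reduce; rw [prod_entry_row A C D hC hD hrow]
    _ = ∑ q, ∑ w ∈ univ.filter (fun w => pmCls D hD w = q), A v w * x' q := by
        simp [Finset.sum_mul]
    _ = ∑ w, A v w * x' (pmCls D hD w) := by
        rw [← Finset.sum_fiberwise univ (fun w => pmCls D hD w)
          (fun w => A v w * x' (pmCls D hD w))]
        refine Finset.sum_congr rfl fun q _ => Finset.sum_congr rfl fun w hw => ?_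
        rw [(Finset.mem_filter.mp hw).2]
    _ = (A *ᵥ (D *ᵥ x')) v := by rw [hDx]; rfl

lemma keyL2 (A : Matrix V W ℝ) (C : Matrix V Pt ℝ) (D : Matrix W Qt ℝ)
    (hC : PartitionMatrix C) (hD : PartitionMatrix D)
    (hcol : ∀ (p : Pt) (q : Qt) (w w' : W), D w q = 1 → D w' q = 1 →
      ∑ v ∈ univ.filter (fun v => C v p = 1), A v w =
      ∑ v ∈ univ.filter (fun v => C v p = 1), A v w')
    (x : W → ℝ) (p : Pt) :
    ((scaledT C * A * D) *ᵥ (scaledT D *ᵥ x)) p = (scaledT C *ᵥ (A *ᵥ x)) p := by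
  have hn : (∑ v, C v p) ≠ 0 := (pm_colsum_pos C hC p).ne'
  have hperq : ∀ q : Qt, (scaledT C * A * D) p q * (scaledT D *ᵥ x) q
      = (∑ w ∈ univ.filter (fun w => pmCls D hD w = q),
          (∑ v ∈ univ.filter (fun v => pmCls C hC v = p), A v w) * x w) / (∑ v, C v p) := by
    intro q
    obtain ⟨w₀, hw₀⟩ := pm_class_nonempty D hD q
    have hw₀' : pmCls D hD w₀ = q := (Finset.mem_filter.mp hw₀).2
    have hconst : ∀ w ∈ univ.filter (fun w => pmCls D hD w = q),
        (∑ v ∈ univ.filter (fun v => pmCls C hC v = p), A v w)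
          = ∑ v ∈ univ.filter (fun v => pmCls C hC v = p), A v w₀ := by
      intro w hw
      rw [← pm_filter C hC p]
      exact hcol p q w w₀ ((pm_one_iff D hD w q).mpr (Finset.mem_filter.mp hw).2)
        ((pm_one_iff D hD w₀ q).mpr hw₀')
    have hcardD : ((univ.filter fun w => pmCls D hD w = q).card : ℝ) ≠ 0 :=
      Nat.cast_ne_zero.mpr (Finset.card_pos.mpr (pm_class_nonempty D hD q)).ne'
    have e1 : (scaledT C * A * D) p q
        = ((univ.filter fun w => pmCls D hD w = q).card : ℝ)
          * (∑ v ∈ univ.filter (fun v => pmCls C hC v = p), A v w₀) / (∑ v, C v p) := by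
      rw [prod_entry A C D hC hD, Finset.sum_comm (f := fun v w => A v w), Finset.sum_congr rfl hconst,
        Finset.sum_const, nsmul_eq_mul]
    have e2 : (scaledT D *ᵥ x) q
        = (∑ w ∈ univ.filter (fun w => pmCls D hD w = q), x w)
          / ((univ.filter fun w => pmCls D hD w = q).card : ℝ) := by
      rw [pm_scaledT_mulVec D hD, pm_colsum D hD]
    have e3 : ∑ w ∈ univ.filter (fun w => pmCls D hD w = q),
        (∑ v ∈ univ.filter (fun v => pmCls C hC v = p), A v w) * x w
        = (∑ v ∈ univ.filter (fun v => pmCls C hC v = p), A v w₀)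
          * ∑ w ∈ univ.filter (fun w => pmCls D hD w = q), x w := by
      rw [Finset.mul_sum]
      exact Finset.sum_congr rfl fun w hw => by rw [hconst w hw]
    rw [e1, e2, e3]
    field_simp
  calc ((scaledT C * A * D) *ᵥ (scaledT D *ᵥ x)) p
      = ∑ q, (scaledT C * A * D) p q * (scaledT D *ᵥ x) q := rfl
    _ = (∑ q, ∑ w ∈ univ.filter (fun w => pmCls D hD w = q),
          (∑ v ∈ univ.filter (fun v => pmCls C hC v = p), A v w) * x w) / (∑ v, C v p) := by
        rw [Finset.sum_div]
        exact Finset.sum_congr rfl fun q _ => hperq q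
    _ = (∑ w, (∑ v ∈ univ.filter (fun v => pmCls C hC v = p), A v w) * x w)
          / (∑ v, C v p) := by
        rw [Finset.sum_fiberwise univ (fun w => pmCls D hD w)
          (fun w => (∑ v ∈ univ.filter (fun v => pmCls C hC v = p), A v w) * x w)]
    _ = (scaledT C *ᵥ (A *ᵥ x)) p := by
        rw [pm_scaledT_mulVec C hC]
        congr 1
        simp only [Finset.sum_mul]
        rw [Finset.sum_comm]
        exact Finset.sum_congr rfl fun v _ => rfl

lemma keyL3 (D : Matrix W Qt ℝ) (hD : PartitionMatrix D) (c : W → ℝ)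
    (hc : ∀ (q : Qt) (w w' : W), D w q = 1 → D w' q = 1 → c w = c w')
    (x : W → ℝ) :
    (Dᵀ *ᵥ c) ⬝ᵥ (scaledT D *ᵥ x) = c ⬝ᵥ x := by
  have hDt : ∀ q, (Dᵀ *ᵥ c) q = ∑ w ∈ univ.filter (fun w => pmCls D hD w = q), c w := by
    intro q
    simp only [Matrix.mulVec, dotProduct, Matrix.transpose_apply]
    rw [Finset.sum_filter]
    refine Finset.sum_congr rfl fun w _ => ?_
    beta_reduce; rw [pm_ite D hD w q]; split <;> simp
  have hperq : ∀ q : Qt, (Dᵀ *ᵥ c) q * (scaledT D *ᵥ x) q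
      = ∑ w ∈ univ.filter (fun w => pmCls D hD w = q), c w * x w := by
    intro q
    obtain ⟨w₀, hw₀⟩ := pm_class_nonempty D hD q
    have hw₀' : pmCls D hD w₀ = q := (Finset.mem_filter.mp hw₀).2
    have hcc : ∀ w ∈ univ.filter (fun w => pmCls D hD w = q), c w = c w₀ := fun w hw =>
      hc q w w₀ ((pm_one_iff D hD w q).mpr (Finset.mem_filter.mp hw).2)
        ((pm_one_iff D hD w₀ q).mpr hw₀')
    have hcardD : ((univ.filter fun w => pmCls D hD w = q).card : ℝ) ≠ 0 :=
      Nat.cast_ne_zero.mpr (Finset.card_pos.mpr (pm_class_nonempty D hD q)).ne'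
    have e3 : ∑ w ∈ univ.filter (fun w => pmCls D hD w = q), c w * x w
        = c w₀ * ∑ w ∈ univ.filter (fun w => pmCls D hD w = q), x w := by
      rw [Finset.mul_sum]
      exact Finset.sum_congr rfl fun w hw => by rw [hcc w hw]
    rw [hDt, pm_scaledT_mulVec D hD, pm_colsum D hD, Finset.sum_congr rfl hcc,
      Finset.sum_const, nsmul_eq_mul, e3]
    field_simp
  calc (Dᵀ *ᵥ c) ⬝ᵥ (scaledT D *ᵥ x)
      = ∑ q, (Dᵀ *ᵥ c) q * (scaledT D *ᵥ x) q := rfl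
    _ = ∑ q, ∑ w ∈ univ.filter (fun w => pmCls D hD w = q), c w * x w :=
        Finset.sum_congr rfl fun q _ => hperq q
    _ = c ⬝ᵥ x := Finset.sum_fiberwise univ _ _

lemma keyL4 (D : Matrix W Qt ℝ) (c : W → ℝ) (x' : Qt → ℝ) :
    c ⬝ᵥ (D *ᵥ x') = (Dᵀ *ᵥ c) ⬝ᵥ x' := by
  rw [Matrix.dotProduct_mulVec, Matrix.mulVec_transpose]

end Key

/-- **Reduction Lemma, dual form LPs.** Let `(𝒫, 𝒬)` be an equitable
partition of `A` (partition matrices `C, D`) with `b` constant on classes of `𝒫` and `c`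
constant on classes of `𝒬`. Set `A' = CˢAD`, `b' = Cˢb`, `c' = Dᵗc`. If `x'` is feasible
for `max (c')ᵗx' s.t. A'x' ≤ b'` then `Dx'` is feasible for `max cᵗx s.t. Ax ≤ b`, and
optimality is preserved in both directions via `x ↦ Dˢx` and `x' ↦ Dx'`. -/
theorem reduction_lemma_dual_LP
    {V W Pt Qt : Type*} [Fintype V] [Fintype W] [Fintype Pt] [Fintype Qt]
    (A : Matrix V W ℝ) (b : V → ℝ) (c : W → ℝ)
    (C : Matrix V Pt ℝ) (D : Matrix W Qt ℝ)
    (hC : PartitionMatrix C) (hD : PartitionMatrix D)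
    (hrow : ∀ (p : Pt) (q : Qt) (v v' : V), C v p = 1 → C v' p = 1 →
      ∑ w ∈ univ.filter (fun w => D w q = 1), A v w =
      ∑ w ∈ univ.filter (fun w => D w q = 1), A v' w)
    (hcol : ∀ (p : Pt) (q : Qt) (w w' : W), D w q = 1 → D w' q = 1 →
      ∑ v ∈ univ.filter (fun v => C v p = 1), A v w =
      ∑ v ∈ univ.filter (fun v => C v p = 1), A v w')
    (hb : ∀ (p : Pt) (v v' : V), C v p = 1 → C v' p = 1 → b v = b v')
    (hc : ∀ (q : Qt) (w w' : W), D w q = 1 → D w' q = 1 → c w = c w') :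
    (∀ x' : Qt → ℝ, DualFeasible (scaledT C * A * D) (scaledT C *ᵥ b) x' →
      DualFeasible A b (D *ᵥ x')) ∧
    (∀ x : W → ℝ, DualOptimal A b c x →
      DualOptimal (scaledT C * A * D) (scaledT C *ᵥ b) (Dᵀ *ᵥ c) (scaledT D *ᵥ x)) ∧
    (∀ x' : Qt → ℝ, DualOptimal (scaledT C * A * D) (scaledT C *ᵥ b) (Dᵀ *ᵥ c) x' →
      DualOptimal A b c (D *ᵥ x')) := by
  have feas1 : ∀ x' : Qt → ℝ, DualFeasible (scaledT C * A * D) (scaledT C *ᵥ b) x' →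
      DualFeasible A b (D *ᵥ x') := by
    intro x' hx' v
    have h1 := keyL1 A C D hC hD hrow x' v
    have h2 := hx' (pmCls C hC v)
    have h3 : (scaledT C *ᵥ b) (pmCls C hC v) = b v :=
      pm_scaledT_mulVec_const C hC b v (fun v' hv' =>
        hb (pmCls C hC v) v' v ((pm_one_iff C hC v' _).mpr hv') (pmCls_one C hC v))
    rw [← h1]
    rw [h3] at h2
    exact h2
  have feas2 : ∀ x : W → ℝ, DualFeasible A b x →
      DualFeasible (scaledT C * A * D) (scaledT C *ᵥ b) (scaledT D *ᵥ x) := by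
    intro x hx p
    rw [keyL2 A C D hC hD hcol x p]
    exact pm_scaledT_mono C hC hx p
  refine ⟨feas1, ?_, ?_⟩
  · rintro x ⟨hxf, hxo⟩
    refine ⟨feas2 x hxf, fun y' hy' => ?_⟩
    rw [keyL3 D hD c hc x, ← keyL4 D c y']
    exact hxo _ (feas1 y' hy')
  · rintro x' ⟨hxf, hxo⟩
    refine ⟨feas1 x' hxf, fun y hy => ?_⟩
    rw [keyL4 D c x']
    have h := hxo (scaledT D *ᵥ y) (feas2 y hy)
    rwa [keyL3 D hD c hc y] at h
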